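/- The Euler allocation of the floored FRTB expected shortfall is a full allocation (claim in Remark 3.5): Let N be a positive integer and for each j ∈ Fin 5 let g_j : (Fin N → ℝ) → ℝ be positively homogeneous of degree 1 and Fréchet differentiable at the all-ones vector 𝟙. Set ES⁺ = sqrt(∑_{j ∈ Fin 5} max(g_j(𝟙), 0)²) and assume ES⁺ ≠ 0. Define the floored Euler allocation by A_n(j) = (max(g_j(𝟙),0)/ES⁺) · (fderiv ℝ g_j 𝟙)(e_n) if g_j(𝟙) > 0, and A_n(j) = 0 otherwise. Then ∑_{n ∈ Fin N} ∑_{j ∈ Fin 5} A_n(j) = ES⁺. -/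

import Mathlib

/-- Euler's theorem for positively homogeneous functions, applied at 𝟙. -/
lemma euler_at_one {N : ℕ} (g : (Fin N → ℝ) → ℝ)
    (hhom : ∀ (a : ℝ), 0 ≤ a → ∀ v : Fin N → ℝ, g (a • v) = a * g v)
    (hdiff : DifferentiableAt ℝ g (1 : Fin N → ℝ)) :
    (fderiv ℝ g (1 : Fin N → ℝ)) (1 : Fin N → ℝ) = g 1 := by
  have hf : HasDerivAt (fun a : ℝ => a • (1 : Fin N → ℝ)) (1 : Fin N → ℝ) 1 := by
    simpa using (hasDerivAt_id (1 : ℝ)).smul_const (1 : Fin N → ℝ)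
  have h1 : HasDerivAt (fun a : ℝ => g (a • (1 : Fin N → ℝ)))
      ((fderiv ℝ g (1 : Fin N → ℝ)) (1 : Fin N → ℝ)) 1 := by
    have hd := hdiff.hasFDerivAt
    rw [show (1 : Fin N → ℝ) = (1:ℝ) • (1 : Fin N → ℝ) by simp] at hd
    have h3 := hd.comp_hasDerivAt 1 hf
    simp only [one_smul] at h3
    exact h3
  have h2 : HasDerivAt (fun a : ℝ => a * g 1) (g 1) 1 := by
    simpa using (hasDerivAt_id (1 : ℝ)).mul_const (g 1)
  have heq : (fun a : ℝ => g (a • (1 : Fin N → ℝ))) =ᶠ[nhds 1] (fun a : ℝ => a * g 1) := by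
    filter_upwards [eventually_gt_nhds (by norm_num : (0:ℝ) < 1)] with a ha
    exact hhom a ha.le 1
  exact h1.unique (h2.congr_of_eventuallyEq heq)

/-- The Euler allocation of the floored FRTB expected shortfall is a full
allocation (Remark 3.5). -/
theorem floored_euler_allocation_full {N : ℕ} (hN : 0 < N)
    (g : Fin 5 → (Fin N → ℝ) → ℝ)
    (hhom : ∀ j, ∀ (a : ℝ), 0 ≤ a → ∀ v : Fin N → ℝ, g j (a • v) = a * g j v)
    (hdiff : ∀ j, DifferentiableAt ℝ (g j) (1 : Fin N → ℝ))
    (hne : Real.sqrt (∑ j, (max (g j (1 : Fin N → ℝ)) 0) ^ 2) ≠ 0) :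
    ∑ n : Fin N, ∑ j : Fin 5,
        (if 0 < g j (1 : Fin N → ℝ) then
          (max (g j (1 : Fin N → ℝ)) 0
              / Real.sqrt (∑ k, (max (g k (1 : Fin N → ℝ)) 0) ^ 2))
            * (fderiv ℝ (g j) (1 : Fin N → ℝ)) (Pi.single n 1)
        else 0)
      = Real.sqrt (∑ j, (max (g j (1 : Fin N → ℝ)) 0) ^ 2) := by
  set S := Real.sqrt (∑ j, (max (g j (1 : Fin N → ℝ)) 0) ^ 2) with hS
  have hsingle : (∑ n : Fin N, Pi.single n (1:ℝ)) = (1 : Fin N → ℝ) := by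
    simpa using Finset.univ_sum_single (1 : Fin N → ℝ)
  rw [Finset.sum_comm]
  have hterm : ∀ j : Fin 5,
      (∑ n : Fin N, (if 0 < g j (1 : Fin N → ℝ) then
          (max (g j (1 : Fin N → ℝ)) 0 / S)
            * (fderiv ℝ (g j) (1 : Fin N → ℝ)) (Pi.single n 1)
        else 0)) = (max (g j (1 : Fin N → ℝ)) 0) ^ 2 / S := by
    intro j
    by_cases h : 0 < g j (1 : Fin N → ℝ)
    · simp only [if_pos h]
      rw [← Finset.mul_sum, ← map_sum, hsingle,
        euler_at_one (g j) (hhom j) (hdiff j)]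
      rw [max_eq_left h.le]
      ring
    · simp [if_neg h, max_eq_right (not_lt.mp h), S]
  rw [Finset.sum_congr rfl (fun j _ => hterm j), ← Finset.sum_div]
  rw [hS, Real.sq_sqrt (Finset.sum_nonneg fun j _ => sq_nonneg _) |>.symm] at *
  rw [Real.sqrt_sq (Real.sqrt_nonneg _)]
  have ha : Real.sqrt (∑ j, (max (g j (1 : Fin N → ℝ)) 0) ^ 2) ≠ 0 := hne
  rw [pow_two, mul_div_assoc, div_self ha, mul_one]
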